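/- Let A be a free arrangement in K^ℓ with exponents {1, e_2, ..., e_ℓ}. Fix H_0 ∈ A and m_0 ≥ 1, and let δ be the multiplicity concentrated at H_0 with value m_0, i.e. δ(H_0) = m_0 and δ(H) = 1 for H ≠ H_0. Then the multiarrangement (A, δ) is free with exponents {m_0, e_2, ..., e_ℓ}. -/
import Mathlib


open MvPolynomial

open scoped Classical

noncomputable section

/-- A (polynomial) derivation on `K[x_1,...,x_n]`, given by its coefficient
vector: `θ` represents `∑ i, θ i * ∂/∂ x i`. -/
abbrev MvDer (n : ℕ) (K : Type*) [Field K] : Type _ := Fin n → MvPolynomial (Fin n) K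

/-- Application of a derivation (given by its coefficient vector) to a polynomial,
as a linear map over the polynomial ring. -/
def derAppL {K : Type*} [Field K] {n : ℕ} (f : MvPolynomial (Fin n) K) :
    MvDer n K →ₗ[MvPolynomial (Fin n) K] MvPolynomial (Fin n) K where
  toFun θ := ∑ i, θ i * MvPolynomial.pderiv i f
  map_add' θ₁ θ₂ := by
    simp [add_mul, Finset.sum_add_distrib]
  map_smul' c θ := by
    simp [Finset.mul_sum, smul_eq_mul, mul_assoc]

/-- The module of derivations `D(A, μ)` of the multiarrangement with defining linear
forms `A` and multiplicity function `μ`: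
`D(A,μ) = {θ : θ(α) ∈ α^(μ α) · S for all α ∈ A}`. -/
def Dmod {K : Type*} [Field K] {n : ℕ} (A : Finset (MvPolynomial (Fin n) K))
    (μ : MvPolynomial (Fin n) K → ℕ) :
    Submodule (MvPolynomial (Fin n) K) (MvDer n K) :=
  ⨅ α ∈ A, Submodule.comap (derAppL α) (Ideal.span {α ^ μ α})

/-- The module of derivations of a multiarrangement given as a finite set of
(form, multiplicity) pairs. -/
def DmodP {K : Type*} [Field K] {n : ℕ} (P : Finset (MvPolynomial (Fin n) K × ℕ)) :
    Submodule (MvPolynomial (Fin n) K) (MvDer n K) :=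
  ⨅ p ∈ P, Submodule.comap (derAppL p.1) (Ideal.span {p.1 ^ p.2})

/-- A derivation is homogeneous of polynomial degree `d` if all its coefficient
polynomials are homogeneous of degree `d`. -/
def IsHomogDer {K : Type*} [Field K] {n : ℕ} (θ : MvDer n K) (d : ℕ) : Prop :=
  ∀ i, (θ i).IsHomogeneous d

/-- `θ` is a basis of the submodule `D` of the module of derivations. -/
def IsBasisOf {K : Type*} [Field K] {n : ℕ} (θ : Fin n → MvDer n K)
    (D : Submodule (MvPolynomial (Fin n) K) (MvDer n K)) : Prop :=
  (∀ i, θ i ∈ D) ∧ LinearIndependent (MvPolynomial (Fin n) K) θ ∧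
    Submodule.span (MvPolynomial (Fin n) K) (Set.range θ) = D

/-- `D` is a free module with a homogeneous basis of degrees `e 0, ..., e (n-1)`. -/
def FreeWithExps {K : Type*} [Field K] {n : ℕ}
    (D : Submodule (MvPolynomial (Fin n) K) (MvDer n K)) (e : Fin n → ℕ) : Prop :=
  ∃ θ : Fin n → MvDer n K, IsBasisOf θ D ∧ ∀ i, IsHomogDer (θ i) (e i)

/-- `D` is a free module with a homogeneous basis whose multiset of degrees is `E`. -/
def FreeWithExpM {K : Type*} [Field K] {n : ℕ}
    (D : Submodule (MvPolynomial (Fin n) K) (MvDer n K)) (E : Multiset ℕ) : Prop :=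
  ∃ (θ : Fin n → MvDer n K) (d : Fin n → ℕ), IsBasisOf θ D ∧
    (∀ i, IsHomogDer (θ i) (d i)) ∧ Multiset.map d Finset.univ.val = E

/-- The zero set (kernel) of the linear form given by the polynomial `α`. -/
def kerV {K : Type*} [Field K] {n : ℕ} (α : MvPolynomial (Fin n) K) : Set (Fin n → K) :=
  {v | MvPolynomial.eval v α = 0}

/-- Pull back a polynomial along a linear embedding `ι : K^m → K^n`; for a linear
form `α` this is the restriction of `α` to the image of `ι`, expressed in the
coordinates of `K^m`. -/
def restrictForm {K : Type*} [Field K] {m n : ℕ} (ι : (Fin m → K) →ₗ[K] (Fin n → K))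
    (α : MvPolynomial (Fin n) K) : MvPolynomial (Fin m) K :=
  MvPolynomial.aeval
    (fun i : Fin n => ∑ j : Fin m, MvPolynomial.C (ι (Pi.single j 1) i) * MvPolynomial.X j) α

/-- `A''` is (a set of defining forms for) the restriction of the arrangement `A`
to the hyperplane `H₀ = ker α₀`, where `ι` is a linear parametrization of `H₀`:
the elements of `A''` are nonzero linear forms with pairwise distinct kernels,
whose kernels are exactly the intersections `H ∩ H₀` for `H ∈ A \ {H₀}`. -/
def IsRestriction {K : Type*} [Field K] {m n : ℕ} (A : Finset (MvPolynomial (Fin n) K))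
    (α₀ : MvPolynomial (Fin n) K) (ι : (Fin m → K) →ₗ[K] (Fin n → K))
    (A'' : Finset (MvPolynomial (Fin m) K)) : Prop :=
  (∀ β ∈ A'', β.IsHomogeneous 1 ∧ β ≠ 0) ∧
  (∀ β₁ ∈ A'', ∀ β₂ ∈ A'', kerV β₁ = kerV β₂ → β₁ = β₂) ∧
  (∀ α ∈ A, α ≠ α₀ → ∃ β ∈ A'', kerV β = kerV (restrictForm ι α)) ∧
  (∀ β ∈ A'', ∃ α ∈ A, α ≠ α₀ ∧ kerV β = kerV (restrictForm ι α))

/-- Ziegler's canonical multiplicity: for a hyperplane `Y = ker β` of the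
restriction, `κ(Y) = |A_Y| - 1`, the number of hyperplanes of `A` (other than
`H₀`) lying above `Y`. -/
def zieglerMult {K : Type*} [Field K] {m n : ℕ} (A : Finset (MvPolynomial (Fin n) K))
    (ι : (Fin m → K) →ₗ[K] (Fin n → K)) (β : MvPolynomial (Fin m) K) : ℕ :=
  ({α : MvPolynomial (Fin n) K |
      α ∈ A ∧ ∀ w ∈ kerV β, MvPolynomial.eval (ι w) α = 0}).ncard - 1

end

noncomputable section AuxConcentrated
open MvPolynomial

variable {K : Type*} [Field K] {N : ℕ}

lemma derAppL_apply' (f : MvPolynomial (Fin N) K) (θ : MvDer N K) :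
    derAppL f θ = ∑ i, θ i * MvPolynomial.pderiv i f := rfl

lemma mem_Dmod_iff' {A : Finset (MvPolynomial (Fin N) K)} {μ : MvPolynomial (Fin N) K → ℕ}
    {θ : MvDer N K} : θ ∈ Dmod A μ ↔ ∀ α ∈ A, α ^ μ α ∣ derAppL α θ := by
  simp [Dmod, Submodule.mem_iInf, Ideal.mem_span_singleton]

lemma degree_one_exists {d : Fin N →₀ ℕ} (hd : d.degree = 1) :
    ∃ j, d = Finsupp.single j 1 := by
  have hne : d ≠ 0 := by
    intro h
    rw [h, map_zero] at hd
    omega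
  obtain ⟨j, hj⟩ : ∃ j, d j ≠ 0 := by
    by_contra hcon
    push_neg at hcon
    exact hne (Finsupp.ext fun a => hcon a)
  have hj1 : d j = 1 :=
    le_antisymm (hd ▸ Finsupp.le_degree j d) (Nat.one_le_iff_ne_zero.mpr hj)
  refine ⟨j, Finsupp.ext fun k => ?_⟩
  by_cases hk : k = j
  · subst hk; simp [hj1]
  · rw [Finsupp.single_apply, if_neg (Ne.symm hk)]
    by_contra hk0
    have hjs : j ∈ d.support := Finsupp.mem_support_iff.mpr hj
    have hks : k ∈ d.support := Finsupp.mem_support_iff.mpr hk0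
    have hsub : ({j, k} : Finset (Fin N)) ⊆ d.support := by
      intro x hx
      rcases Finset.mem_insert.mp hx with rfl | hx
      · exact hjs
      · rw [Finset.mem_singleton] at hx; subst hx; exact hks
    have hle : ∑ x ∈ ({j, k} : Finset (Fin N)), d x ≤ d.degree :=
      Finset.sum_le_sum_of_subset hsub
    rw [Finset.sum_pair (Ne.symm hk)] at hle
    rw [hd] at hle
    omega

lemma linear_form_eq {α : MvPolynomial (Fin N) K} (h : α.IsHomogeneous 1) :
    α = ∑ j, MvPolynomial.C (MvPolynomial.coeff (Finsupp.single j 1) α) * MvPolynomial.X j := by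
  ext d
  rw [MvPolynomial.coeff_sum]
  simp_rw [MvPolynomial.coeff_C_mul, MvPolynomial.coeff_X']
  by_cases hd : ∃ j, d = Finsupp.single j 1
  · obtain ⟨j, rfl⟩ := hd
    rw [Finset.sum_eq_single j]
    · simp
    · intro b _ hb
      rw [if_neg fun hEq => hb (Finsupp.single_left_injective one_ne_zero hEq), mul_zero]
    · intro hj; exact absurd (Finset.mem_univ j) hj
  · push_neg at hd
    rw [h.coeff_eq_zero, Finset.sum_eq_zero]
    · intro b _
      rw [if_neg fun hEq => hd b hEq.symm, mul_zero]
    · intro hdeg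
      obtain ⟨j, hj⟩ := degree_one_exists hdeg
      exact hd j hj

lemma pderiv_linear {α : MvPolynomial (Fin N) K} (h : α.IsHomogeneous 1) (i : Fin N) :
    MvPolynomial.pderiv i α = MvPolynomial.C (MvPolynomial.coeff (Finsupp.single i 1) α) := by
  conv_lhs => rw [linear_form_eq h]
  rw [map_sum]
  simp_rw [MvPolynomial.pderiv_C_mul, MvPolynomial.pderiv_X]
  rw [Finset.sum_eq_single i]
  · simp
  · intro b _ hb
    simp [Pi.single_apply, hb]
  · intro hj; exact absurd (Finset.mem_univ i) hj

lemma euler_linear {α : MvPolynomial (Fin N) K} (h : α.IsHomogeneous 1) :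
    derAppL α (fun i => (MvPolynomial.X i : MvPolynomial (Fin N) K)) = α := by
  rw [derAppL_apply']
  simp_rw [pderiv_linear h]
  conv_rhs => rw [linear_form_eq h]
  exact Finset.sum_congr rfl fun j _ => mul_comm _ _

lemma derAppL_isHomogeneous {α : MvPolynomial (Fin N) K} (hα : α.IsHomogeneous 1)
    {θ : MvDer N K} {d : ℕ} (hθ : IsHomogDer θ d) : (derAppL α θ).IsHomogeneous d := by
  rw [derAppL_apply']
  apply MvPolynomial.IsHomogeneous.sum
  intro i _
  rw [pderiv_linear hα]
  have := (hθ i).mul (MvPolynomial.isHomogeneous_C _ (MvPolynomial.coeff (Finsupp.single i 1) α))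
  simpa using this

lemma homogeneousComponent_mul_linear {α q : MvPolynomial (Fin N) K}
    (hα : α.IsHomogeneous 1) (k : ℕ) :
    MvPolynomial.homogeneousComponent (k + 1) (q * α) =
      MvPolynomial.homogeneousComponent k q * α := by
  conv_lhs => rw [← MvPolynomial.sum_homogeneousComponent q, Finset.sum_mul, map_sum]
  rw [Finset.sum_eq_single k]
  · have hmem : MvPolynomial.homogeneousComponent k q * α ∈
        MvPolynomial.homogeneousSubmodule (Fin N) K (k + 1) := by
      rw [MvPolynomial.mem_homogeneousSubmodule]
      exact (MvPolynomial.homogeneousComponent_isHomogeneous k q).mul hα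
    rw [MvPolynomial.homogeneousComponent_of_mem hmem, if_pos rfl]
  · intro b _ hb
    have hmem : MvPolynomial.homogeneousComponent b q * α ∈
        MvPolynomial.homogeneousSubmodule (Fin N) K (b + 1) := by
      rw [MvPolynomial.mem_homogeneousSubmodule]
      exact (MvPolynomial.homogeneousComponent_isHomogeneous b q).mul hα
    rw [MvPolynomial.homogeneousComponent_of_mem hmem, if_neg (by omega)]
  · intro hk
    rw [Finset.mem_range, not_lt] at hk
    rw [MvPolynomial.homogeneousComponent_eq_zero k q (by omega), zero_mul, map_zero]

lemma homog_div {q α : MvPolynomial (Fin N) K} (hα : α.IsHomogeneous 1) (hα0 : α ≠ 0)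
    {d : ℕ} (h : (q * α).IsHomogeneous d) :
    q.IsHomogeneous (d - 1) ∧ (d = 0 → q = 0) := by
  have key : ∀ k, k + 1 ≠ d → MvPolynomial.homogeneousComponent k q = 0 := by
    intro k hk
    have h1 : MvPolynomial.homogeneousComponent k q * α = 0 := by
      rw [← homogeneousComponent_mul_linear hα k]
      rw [MvPolynomial.homogeneousComponent_of_mem
        ((MvPolynomial.mem_homogeneousSubmodule _ _).mpr h), if_neg hk]
    rcases mul_eq_zero.mp h1 with h2 | h2
    · exact h2
    · exact absurd h2 hα0
  constructor
  · by_cases hd : d = 0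
    · have hq : q = 0 := by
        conv_lhs => rw [← MvPolynomial.sum_homogeneousComponent q]
        exact Finset.sum_eq_zero fun i _ => key i (by omega)
      rw [hq]
      exact MvPolynomial.isHomogeneous_zero _ _ _
    · have hq : q = MvPolynomial.homogeneousComponent (d - 1) q := by
        conv_lhs => rw [← MvPolynomial.sum_homogeneousComponent q]
        rw [Finset.sum_eq_single (d - 1)]
        · intro b _ hb
          exact key b (by omega)
        · intro hdr
          rw [Finset.mem_range, not_lt] at hdr
          exact MvPolynomial.homogeneousComponent_eq_zero _ q (by omega)
      rw [hq]
      exact MvPolynomial.homogeneousComponent_isHomogeneous _ q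
  · intro hd
    conv_lhs => rw [← MvPolynomial.sum_homogeneousComponent q]
    exact Finset.sum_eq_zero fun i _ => key i (by omega)

lemma isHomogeneous_zero_eq_C {q : MvPolynomial (Fin N) K} (h : q.IsHomogeneous 0) :
    q = MvPolynomial.C (MvPolynomial.coeff 0 q) := by
  have h1 := MvPolynomial.homogeneousComponent_of_mem
    ((MvPolynomial.mem_homogeneousSubmodule _ _).mpr h) (m := 0)
  rw [if_pos rfl] at h1
  conv_lhs => rw [← h1]
  rw [MvPolynomial.homogeneousComponent_zero]

end AuxConcentrated

/-- If `A` is free with exponents `{1, e_2, ..., e_ℓ}` and `δ` is the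
multiplicity concentrated at `H₀` with value `m₀`, then `(A, δ)` is free with
exponents `{m₀, e_2, ..., e_ℓ}`. -/
theorem concentrated_multiplicity_free
    {K : Type*} [Field K] {n : ℕ}
    (A : Finset (MvPolynomial (Fin (n + 1)) K))
    (hforms : ∀ α ∈ A, α.IsHomogeneous 1 ∧ α ≠ 0)
    (hdist : ∀ α ∈ A, ∀ β ∈ A, kerV α = kerV β → α = β)
    (α₀ : MvPolynomial (Fin (n + 1)) K) (hα₀ : α₀ ∈ A)
    (m₀ : ℕ) (hm₀ : 1 ≤ m₀)
    (e : Fin (n + 1) → ℕ) (he : e 0 = 1)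
    (hfree : FreeWithExps (Dmod A fun _ => 1) e) :
    FreeWithExps (Dmod A fun α => if α = α₀ then m₀ else 1)
      (fun i => if i = 0 then m₀ else e i) := by
  classical
  obtain ⟨θ, ⟨hmem, hli, hspan⟩, hhom⟩ := hfree
  have hα₀ne : α₀ ≠ 0 := (hforms α₀ hα₀).2
  have hα₀h : α₀.IsHomogeneous 1 := (hforms α₀ hα₀).1
  have hdvd : ∀ i, α₀ ∣ derAppL α₀ (θ i) := by
    intro i
    have := mem_Dmod_iff'.mp (hmem i) α₀ hα₀
    rwa [pow_one] at this
  choose p hp using hdvd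
  have hpd : ∀ i, (p i * α₀).IsHomogeneous (e i) := by
    intro i
    rw [mul_comm, ← hp i]
    exact derAppL_isHomogeneous hα₀h (hhom i)
  have hph : ∀ i, (p i).IsHomogeneous (e i - 1) := fun i => (homog_div hα₀h hα₀ne (hpd i)).1
  have hpz : ∀ i, e i = 0 → p i = 0 := fun i h => (homog_div hα₀h hα₀ne (hpd i)).2 h
  -- Euler derivation lies in D(A)
  have hE : (fun i => (X i : MvPolynomial (Fin (n + 1)) K)) ∈ Dmod A (fun _ => 1) := by
    rw [mem_Dmod_iff']
    intro α hα
    rw [euler_linear (hforms α hα).1, pow_one]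
  rw [← hspan, Submodule.mem_span_range_iff_exists_fun] at hE
  obtain ⟨f, hf⟩ := hE
  have hfp : ∑ i, f i * p i = 1 := by
    have h1 : derAppL α₀ (∑ i, f i • θ i) = α₀ := by rw [hf, euler_linear hα₀h]
    rw [map_sum] at h1
    simp_rw [LinearMap.map_smul, smul_eq_mul, hp] at h1
    have h2 : (∑ i, f i * p i) * α₀ = 1 * α₀ := by
      rw [one_mul, Finset.sum_mul]
      exact (Finset.sum_congr rfl fun i _ => by ring).trans h1
    exact mul_right_cancel₀ hα₀ne h2
  have hex : ∃ j, MvPolynomial.coeff 0 (p j) ≠ 0 := by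
    by_contra hcon
    push_neg at hcon
    have h3 := congrArg MvPolynomial.constantCoeff hfp
    rw [map_sum, map_one] at h3
    simp only [map_mul, MvPolynomial.constantCoeff_eq, hcon, mul_zero,
      Finset.sum_const_zero] at h3
    exact one_ne_zero h3.symm
  obtain ⟨j₀, hc0⟩ := hex
  have hej : e j₀ = 1 := by
    have h1 : e j₀ ≠ 0 := by
      intro h
      rw [hpz j₀ h] at hc0
      simp at hc0
    have h2 : e j₀ - 1 = 0 := by
      by_contra h2
      exact hc0 ((hph j₀).coeff_eq_zero (by rw [map_zero]; omega))
    omega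
  set c : K := MvPolynomial.coeff 0 (p j₀) with hcdef
  have hcne : c ≠ 0 := hc0
  have hpj : p j₀ = C c := by
    have h0 := hph j₀
    rw [hej] at h0
    exact isHomogeneous_zero_eq_C h0
  set σ : Equiv.Perm (Fin (n + 1)) := Equiv.swap 0 j₀ with hσdef
  set θ' : Fin (n + 1) → MvDer (n + 1) K := fun i => θ (σ i) with hθ'def
  set p' : Fin (n + 1) → MvPolynomial (Fin (n + 1)) K := fun i => p (σ i) with hp'def
  have heσ : ∀ i, e (σ i) = e i := by
    intro i
    rcases eq_or_ne i 0 with rfl | h0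
    · rw [hσdef, Equiv.swap_apply_left, hej, he]
    rcases eq_or_ne i j₀ with rfl | hj
    · rw [hσdef, Equiv.swap_apply_right, hej, he]
    · rw [hσdef, Equiv.swap_apply_of_ne_of_ne h0 hj]
  have hσ0 : σ 0 = j₀ := Equiv.swap_apply_left 0 j₀
  have hp'0 : p' 0 = C c := by rw [hp'def]; simp only [hσ0]; exact hpj
  have hp' : ∀ i, derAppL α₀ (θ' i) = α₀ * p' i := fun i => hp (σ i)
  have hmem' : ∀ i, θ' i ∈ Dmod A (fun _ => 1) := fun i => hmem (σ i)
  have hhom' : ∀ i, IsHomogDer (θ' i) (e i) := fun i => heσ i ▸ hhom (σ i)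
  have hph' : ∀ i, (p' i).IsHomogeneous (e i - 1) := fun i => heσ i ▸ hph (σ i)
  have hpz' : ∀ i, e i = 0 → p' i = 0 := fun i h => hpz (σ i) (by rw [heσ i]; exact h)
  set m₁ := m₀ - 1 with hm₁def
  have hm₁ : m₁ + 1 = m₀ := Nat.sub_add_cancel hm₀
  set Φ : Fin (n + 1) → MvDer (n + 1) K := fun i =>
    if i = 0 then α₀ ^ m₁ • θ' 0 else θ' i - (C c⁻¹ * p' i) • θ' 0 with hΦdef
  have hΦ0 : Φ 0 = α₀ ^ m₁ • θ' 0 := by simp [hΦdef]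
  have hΦs : ∀ i, i ≠ 0 → Φ i = θ' i - (C c⁻¹ * p' i) • θ' 0 := by
    intro i hi
    simp only [hΦdef, if_neg hi]
  have hCC : (C c⁻¹ : MvPolynomial (Fin (n + 1)) K) * C c = 1 := by
    rw [← MvPolynomial.C_mul, inv_mul_cancel₀ hcne, MvPolynomial.C_1]
  -- membership
  have hΦmem : ∀ i, Φ i ∈ Dmod A (fun α => if α = α₀ then m₀ else 1) := by
    intro i
    rw [mem_Dmod_iff']
    intro α hα
    by_cases hαα : α = α₀
    · rw [hαα, if_pos rfl]
      by_cases hi : i = 0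
      · subst hi
        rw [hΦ0, LinearMap.map_smul, smul_eq_mul, hp' 0, hp'0]
        exact ⟨C c, by rw [← hm₁, pow_succ]; ring⟩
      · rw [hΦs i hi, map_sub, LinearMap.map_smul, smul_eq_mul, hp' i, hp' 0, hp'0]
        have : α ^ m₀ ∣ (0 : MvPolynomial (Fin (n + 1)) K) := dvd_zero _
        have hzero : α₀ * p' i - C c⁻¹ * p' i * (α₀ * C c) = 0 := by
          have : C c⁻¹ * p' i * (α₀ * C c) = (C c⁻¹ * C c) * (α₀ * p' i) := by ring
          rw [this, hCC, one_mul, sub_self]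
        rw [hzero]
        exact dvd_zero _
    · rw [if_neg hαα, pow_one]
      have d0 : α ∣ derAppL α (θ' 0) := by
        have := mem_Dmod_iff'.mp (hmem' 0) α hα
        rwa [pow_one] at this
      have di : α ∣ derAppL α (θ' i) := by
        have := mem_Dmod_iff'.mp (hmem' i) α hα
        rwa [pow_one] at this
      by_cases hi : i = 0
      · subst hi
        rw [hΦ0, LinearMap.map_smul, smul_eq_mul]
        exact Dvd.dvd.mul_left d0 _
      · rw [hΦs i hi, map_sub, LinearMap.map_smul, smul_eq_mul]
        exact dvd_sub di (Dvd.dvd.mul_left d0 _)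
  -- key computation
  have hKC : ∀ a : Fin (n + 1) → MvPolynomial (Fin (n + 1)) K,
      ∑ i, a i • Φ i =
        (a 0 * α₀ ^ m₁ - C c⁻¹ * ∑ j : Fin n, a j.succ * p' j.succ) • θ' 0
          + ∑ j : Fin n, a j.succ • θ' j.succ := by
    intro a
    rw [Fin.sum_univ_succ]
    have hterm : ∀ j : Fin n, a j.succ • Φ j.succ =
        a j.succ • θ' j.succ - (C c⁻¹ * (a j.succ * p' j.succ)) • θ' 0 := by
      intro j
      rw [hΦs j.succ (Fin.succ_ne_zero j), smul_sub, smul_smul]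
      congr 2
      ring
    simp_rw [hterm]
    rw [Finset.sum_sub_distrib, ← Finset.sum_smul, ← Finset.mul_sum, hΦ0, smul_smul, sub_smul]
    abel
  -- span
  have hmono : Dmod A (fun α => if α = α₀ then m₀ else 1) ≤ Dmod A (fun _ => 1) := by
    intro x hx
    rw [mem_Dmod_iff'] at hx ⊢
    intro α hα
    rw [pow_one]
    refine dvd_trans (dvd_pow_self α ?_) (hx α hα)
    split <;> omega
  have hspan' : Submodule.span (MvPolynomial (Fin (n + 1)) K) (Set.range θ') =
      Dmod A (fun _ => 1) := by
    rw [← hspan]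
    congr 1
    exact (Equiv.surjective σ).range_comp θ
  have hli' : LinearIndependent (MvPolynomial (Fin (n + 1)) K) θ' :=
    hli.comp σ (Equiv.injective σ)
  -- linear independence of Φ
  have hliΦ : LinearIndependent (MvPolynomial (Fin (n + 1)) K) Φ := by
    rw [Fintype.linearIndependent_iff]
    intro a ha
    rw [hKC a] at ha
    set b : Fin (n + 1) → MvPolynomial (Fin (n + 1)) K := fun i =>
      Fin.cases (a 0 * α₀ ^ m₁ - C c⁻¹ * ∑ j : Fin n, a j.succ * p' j.succ)
        (fun j => a j.succ) i with hbdef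
    have hb0eq : b 0 = a 0 * α₀ ^ m₁ - C c⁻¹ * ∑ j : Fin n, a j.succ * p' j.succ := by
      simp [hbdef]
    have hbseq : ∀ j : Fin n, b j.succ = a j.succ := by
      intro j
      simp [hbdef]
    have hbsum : ∑ i, b i • θ' i = 0 := by
      rw [Fin.sum_univ_succ, hb0eq]
      simp_rw [hbseq]
      exact ha
    have hball := Fintype.linearIndependent_iff.mp hli' b hbsum
    have hasucc : ∀ j : Fin n, a j.succ = 0 := fun j => (hbseq j) ▸ hball j.succ
    intro i
    induction i using Fin.cases with
    | zero =>
      have h0 := hball 0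
      rw [hb0eq] at h0
      have hsz : ∑ j : Fin n, a j.succ * p' j.succ = 0 :=
        Finset.sum_eq_zero fun j _ => by rw [hasucc j, zero_mul]
      rw [hsz, mul_zero, sub_zero] at h0
      rcases mul_eq_zero.mp h0 with h | h
      · exact h
      · exact absurd h (pow_ne_zero _ hα₀ne)
    | succ j => exact hasucc j
  -- span equality
  have hspanΦ : Submodule.span (MvPolynomial (Fin (n + 1)) K) (Set.range Φ) =
      Dmod A (fun α => if α = α₀ then m₀ else 1) := by
    apply le_antisymm
    · rw [Submodule.span_le]
      rintro _ ⟨i, rfl⟩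
      exact hΦmem i
    · intro θμ hθμ
      have hθμ1 : θμ ∈ Dmod A (fun _ => 1) := hmono hθμ
      rw [← hspan', Submodule.mem_span_range_iff_exists_fun] at hθμ1
      obtain ⟨g, hg⟩ := hθμ1
      have hdvdμ : α₀ ^ m₀ ∣ derAppL α₀ θμ := by
        have := mem_Dmod_iff'.mp hθμ α₀ hα₀
        simpa using this
      have hder : (∑ i, g i * p' i) * α₀ = derAppL α₀ θμ := by
        rw [← hg, map_sum]
        simp_rw [LinearMap.map_smul, smul_eq_mul, hp']
        rw [Finset.sum_mul]
        exact Finset.sum_congr rfl fun i _ => by ring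
      have hdvds : α₀ ^ m₁ ∣ ∑ i, g i * p' i := by
        have h1 : α₀ ^ m₁ * α₀ ∣ (∑ i, g i * p' i) * α₀ := by
          rw [hder, ← pow_succ, hm₁]
          exact hdvdμ
        exact (mul_dvd_mul_iff_right hα₀ne).mp h1
      obtain ⟨h, hh⟩ := hdvds
      rw [Submodule.mem_span_range_iff_exists_fun]
      refine ⟨fun i => Fin.cases (C c⁻¹ * h) (fun j => g j.succ) i, ?_⟩
      rw [hKC]
      simp only [Fin.cases_zero, Fin.cases_succ]
      have hsum : ∑ j : Fin n, g j.succ * p' j.succ = α₀ ^ m₁ * h - g 0 * C c := by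
        have h1 := hh
        rw [Fin.sum_univ_succ, hp'0] at h1
        linear_combination h1
      rw [hsum]
      have hscal : C c⁻¹ * h * α₀ ^ m₁ - C c⁻¹ * (α₀ ^ m₁ * h - g 0 * C c) = g 0 := by
        linear_combination g 0 * hCC
      rw [hscal, ← Fin.sum_univ_succ (f := fun i => g i • θ' i)]
      exact hg
  -- homogeneity
  have hΦhom : ∀ i, IsHomogDer (Φ i) (if i = 0 then m₀ else e i) := by
    intro i
    rcases eq_or_ne i 0 with rfl | hi
    · rw [if_pos rfl]
      intro k
      rw [hΦ0]
      have h1 : ((α₀ ^ m₁) * θ' 0 k).IsHomogeneous (1 * m₁ + 1) := by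
        have := (hα₀h.pow m₁).mul (he ▸ hhom' 0 k)
        exact this
      have h2 : 1 * m₁ + 1 = m₀ := by omega
      rw [h2] at h1
      exact h1
    · rw [if_neg hi]
      intro k
      rw [hΦs i hi]
      have hs : (θ' i k - (C c⁻¹ * p' i * θ' 0 k)).IsHomogeneous (e i) := by
        apply MvPolynomial.IsHomogeneous.sub (hhom' i k)
        rcases Nat.eq_zero_or_pos (e i) with hz | hpos
        · rw [hpz' i hz]
          rw [mul_zero, zero_mul]
          exact MvPolynomial.isHomogeneous_zero _ _ _
        · have h1 := ((MvPolynomial.isHomogeneous_C (Fin (n + 1)) (c⁻¹)).mul (hph' i)).mul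
            (he ▸ hhom' 0 k)
          have h2 : 0 + (e i - 1) + 1 = e i := by omega
          rw [h2] at h1
          exact h1
      exact hs
  exact ⟨Φ, ⟨hΦmem, hliΦ, hspanΦ⟩, hΦhom⟩
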